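/- Let (V, E, o, t, inv) be a finite connected multigraph, let E_T ⊆ E be (the edge set of) a spanning tree, and let γ : E → ℝ^n be a 1-form vanishing on E_T. Suppose there exists a set S ⊆ supp γ with S ∩ inv(S) = ∅ and S ∪ inv(S) = supp γ such that the family of vectors {γ(e) : e ∈ S} is linearly independent over ℚ (as elements of the ℚ-vector space ℝ^n). Then γ is a minimal form: every 1-form b : E → ℝ^n having the same flux function as γ satisfies #supp γ ≤ #supp b. (Paper: Theorem 3.1(v).) -/

import Mathlib

open scoped Classical
open Finset

noncomputable section

/-- The degree of a vertex: the number of oriented edges starting at it. -/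
def mdeg {V E : Type} [Fintype E] (o : E → V) (v : V) : ℕ :=
  (Finset.univ.filter fun e => o e = v).card

/-- The combinatorial magnetic Laplacian `Δ_α`. -/
def magLap {V E : Type} [Fintype E] (o t : E → V) (α : E → ℝ)
    (f : V → ℂ) (v : V) : ℂ :=
  ∑ e ∈ Finset.univ.filter (fun e => o e = v),
    (f v - Complex.exp (Complex.I * (α e : ℂ)) * f (t e))

/-- The fiber magnetic Laplacian `Δ_{m,φ}(θ)`. -/
def fiberLap {V E : Type} [Fintype E] {d : ℕ} (o t : E → V)
    (m : E → Fin d → ℝ) (φ : E → ℝ) (θ : Fin d → ℝ) (f : V → ℂ) (v : V) : ℂ :=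
  (mdeg o v : ℂ) * f v -
    ∑ e ∈ Finset.univ.filter (fun e => o e = v),
      Complex.exp (Complex.I * ((φ e + ∑ i, m e i * θ i : ℝ) : ℂ)) * f (t e)

/-- Standard inner product on `ℂ^V` (conjugate-linear in the first argument). -/
def dotC {V : Type} [Fintype V] (f g : V → ℂ) : ℂ :=
  ∑ v, (starRingEnd ℂ) (f v) * g v

/-- `lam` lists the eigenvalues of the operator `T` on `ℂ^V` in nondecreasing
order, counted with multiplicity (witnessed by an orthonormal eigenbasis). -/
def IsEigList {V : Type} [Fintype V] (T : (V → ℂ) → (V → ℂ))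
    (lam : Fin (Fintype.card V) → ℝ) : Prop :=
  Monotone lam ∧ ∃ u : Fin (Fintype.card V) → (V → ℂ),
    (∀ i j, dotC (u i) (u j) = if i = j then (1 : ℂ) else 0) ∧
    ∀ i, T (u i) = fun v => ((lam i : ℝ) : ℂ) * u i v

/-- A closed walk in the multigraph. -/
def IsClosedWalk {V E : Type} (o t : E → V) {k : ℕ} (c : Fin (k + 1) → E) : Prop :=
  (∀ i : Fin k, t (c i.castSucc) = o (c i.succ)) ∧ t (c (Fin.last k)) = o (c 0)

/-- Two forms have the same flux along every closed walk. -/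
def SameFlux {V E W : Type} [AddCommMonoid W] (o t : E → V) (b b' : E → W) : Prop :=
  ∀ (k : ℕ) (c : Fin (k + 1) → E), IsClosedWalk o t c →
    ∑ i, b (c i) = ∑ i, b' (c i)

/-- Connectivity of the multigraph: any two distinct vertices are the endpoints
of some walk. -/
def MGConnected {V E : Type} (o t : E → V) : Prop :=
  ∀ u v : V, u ≠ v → ∃ (k : ℕ) (c : Fin (k + 1) → E),
    (∀ i : Fin k, t (c i.castSucc) = o (c i.succ)) ∧ o (c 0) = u ∧ t (c (Fin.last k)) = v

/-- The set of fluxes of a form along all closed walks. -/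
def fluxSet {V E W : Type} [AddCommMonoid W] (o t : E → V) (b : E → W) : Set W :=
  {w | ∃ (k : ℕ) (c : Fin (k + 1) → E), IsClosedWalk o t c ∧ ∑ i, b (c i) = w}

/-- The number of oriented edges in the support of a form. -/
def suppCard {E : Type} [Fintype E] {W : Type} [Zero W] (b : E → W) : ℕ :=
  (Finset.univ.filter fun e => b e ≠ 0).card

/-- The integer lattice `ℤ^d` inside `ℝ^d`. -/
def intLattice (d : ℕ) : Set (Fin d → ℝ) :=
  {w | ∀ i, ∃ z : ℤ, w i = (z : ℝ)}

/-- Counting lemma: if `T` selects exactly one orientation of each edge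
satisfying an `inv`-symmetric predicate `p`, then `#filter p = 2 * #T`. -/
lemma half_card_aux {E : Type} [Fintype E] [DecidableEq E] (inv : E → E)
    (hinv : ∀ e, inv (inv e) = e) (p : E → Prop) [DecidablePred p]
    (hp : ∀ e, p e → p (inv e)) (T : Finset E)
    (hT1 : ∀ e ∈ T, p e) (hT2 : ∀ e ∈ T, inv e ∉ T)
    (hT3 : ∀ e, p e → e ∈ T ∨ inv e ∈ T) :
    (Finset.univ.filter p).card = 2 * T.card := by
  have hinj : Function.Injective inv := Function.Involutive.injective hinv
  have hset : Finset.univ.filter p = T ∪ T.image inv := by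
    ext x
    simp only [Finset.mem_filter, Finset.mem_univ, true_and, Finset.mem_union,
      Finset.mem_image]
    constructor
    · intro hx
      rcases hT3 x hx with h | h
      · exact Or.inl h
      · exact Or.inr ⟨inv x, h, hinv x⟩
    · rintro (h | ⟨y, hy, rfl⟩)
      · exact hT1 x h
      · exact hp y (hT1 y hy)
  have hdisj : Disjoint T (T.image inv) := by
    rw [Finset.disjoint_left]
    rintro x hx hx'
    rcases Finset.mem_image.mp hx' with ⟨y, hy, rfl⟩
    exact hT2 y hy hx
  rw [hset, Finset.card_union_of_disjoint hdisj,
    Finset.card_image_of_injective _ hinj]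
  omega

/-- If `γ` is a 1-form vanishing on a spanning tree whose nonzero values (one
per geometric edge, listed by the set `S`) are linearly independent over `ℚ`,
then `γ` is minimal: every 1-form with the same flux function has support at
least as large. -/
theorem minimal_form_rational_independence
    {V E : Type} [Fintype V] [Fintype E] [Nonempty V] {n : ℕ}
    (o t : E → V) (inv : E → E)
    (hfp : ∀ e, inv e ≠ e) (hinv : ∀ e, inv (inv e) = e)
    (hoi : ∀ e, o (inv e) = t e) (hti : ∀ e, t (inv e) = o e)
    (hconn : MGConnected o t)
    (ET : Finset E)
    (hETinv : ∀ e ∈ ET, inv e ∈ ET)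
    (hETcard : ET.card = 2 * (Fintype.card V - 1))
    (hETconn : ∀ u v : V, u ≠ v → ∃ (k : ℕ) (c : Fin (k + 1) → E),
      (∀ i, c i ∈ ET) ∧ (∀ i : Fin k, t (c i.castSucc) = o (c i.succ)) ∧
      o (c 0) = u ∧ t (c (Fin.last k)) = v)
    (γ : E → Fin n → ℝ) (hγ : ∀ e, γ (inv e) = - γ e)
    (hγT : ∀ e ∈ ET, γ e = 0)
    (S : Finset E)
    (hS1 : ∀ e ∈ S, γ e ≠ 0)
    (hS2 : ∀ e ∈ S, inv e ∉ S)
    (hS3 : ∀ e, γ e ≠ 0 → e ∈ S ∨ inv e ∈ S)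
    (hind : LinearIndependent ℚ fun e : {e // e ∈ S} => γ e.1) :
    ∀ b : E → Fin n → ℝ, (∀ e, b (inv e) = - b e) → SameFlux o t γ b →
      suppCard γ ≤ suppCard b := by
  intro b hb hflux
  classical
  -- fundamental cycle through the spanning tree for each edge
  have hcyc : ∀ e : E, ∃ (k : ℕ) (c : Fin (k + 1) → E),
      IsClosedWalk o t c ∧ (∑ i, γ (c i)) = γ e := by
    intro e
    by_cases h : t e = o e
    · refine ⟨0, fun _ => e, ⟨fun i => i.elim0, h⟩, by simp⟩
    · obtain ⟨k, c', hmem, hw, h0, hl⟩ := hETconn (t e) (o e) h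
      refine ⟨k + 1, Fin.cases e c', ⟨?_, ?_⟩, ?_⟩
      · intro i
        refine Fin.cases ?_ ?_ i
        · show t e = o (c' 0)
          exact h0.symm
        · intro j
          have h1 : (Fin.castSucc (Fin.succ j)) = Fin.succ (Fin.castSucc j) := rfl
          rw [h1]
          simp only [Fin.cases_succ]
          exact hw j
      · have h1 : Fin.last (k + 1) = Fin.succ (Fin.last k) := rfl
        rw [h1]
        simp only [Fin.cases_succ, Fin.cases_zero]
        exact hl
      · have hz : ∀ i : Fin (k + 1), γ (c' i) = 0 := fun i => hγT _ (hmem i)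
        rw [Fin.sum_univ_succ]
        simp [hz]
  -- fix an ordering of edges and pick one orientation per edge of supp b
  let ι := Fintype.equivFin E
  set Sb : Finset E :=
    Finset.univ.filter (fun f => b f ≠ 0 ∧ ι f < ι (inv f)) with hSb
  have hbneg : ∀ f, b f = - b (inv f) := by
    intro f
    have := hb (inv f)
    rw [hinv] at this
    exact this
  have hSb1 : ∀ f ∈ Sb, b f ≠ 0 := fun f hf => (Finset.mem_filter.mp hf).2.1
  have hSb2 : ∀ f ∈ Sb, inv f ∉ Sb := by
    intro f hf hf'
    have h1 := (Finset.mem_filter.mp hf).2.2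
    have h2 := (Finset.mem_filter.mp hf').2.2
    rw [hinv] at h2
    exact absurd (h1.trans h2) (lt_irrefl _)
  have hSb3 : ∀ f, b f ≠ 0 → f ∈ Sb ∨ inv f ∈ Sb := by
    intro f hf
    have hne : ι f ≠ ι (inv f) := fun h => hfp f (ι.injective h).symm
    rcases lt_or_gt_of_ne hne with h | h
    · exact Or.inl (Finset.mem_filter.mpr ⟨Finset.mem_univ _, hf, h⟩)
    · refine Or.inr (Finset.mem_filter.mpr ⟨Finset.mem_univ _, ?_, ?_⟩)
      · rw [hb]; simpa using hf
      · rwa [hinv]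
  -- the span of the chosen b-values
  set M : Submodule ℚ (Fin n → ℝ) :=
    Submodule.span ℚ ((Sb.image b : Finset (Fin n → ℝ)) : Set (Fin n → ℝ)) with hM
  have hbM : ∀ f, b f ∈ M := by
    intro f
    by_cases hf : b f = 0
    · rw [hf]; exact M.zero_mem
    · rcases hSb3 f hf with h | h
      · exact Submodule.subset_span (by simpa using ⟨f, h, rfl⟩)
      · have : b (inv f) ∈ M :=
          Submodule.subset_span (by simpa using ⟨inv f, h, rfl⟩)
        rw [hbneg f]
        exact M.neg_mem this
  have hγM : ∀ e, γ e ∈ M := by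
    intro e
    obtain ⟨k, c, hcw, hsum⟩ := hcyc e
    have := hflux k c hcw
    rw [hsum] at this
    rw [this]
    exact Submodule.sum_mem M (fun i _ => hbM (c i))
  -- linear algebra: #S ≤ #Sb
  haveI : FiniteDimensional ℚ M := FiniteDimensional.span_finset ℚ (Sb.image b)
  have hcard : S.card ≤ Sb.card := by
    have hli : LinearIndependent ℚ (fun e : {e // e ∈ S} => (⟨γ e.1, hγM e.1⟩ : M)) := by
      apply LinearIndependent.of_comp M.subtype
      exact hind
    have h1 : Fintype.card {e // e ∈ S} ≤ Module.finrank ℚ M :=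
      hli.fintype_card_le_finrank
    have h2 : Module.finrank ℚ M ≤ (Sb.image b).card :=
      finrank_span_finset_le_card _
    have h3 : (Sb.image b).card ≤ Sb.card := Finset.card_image_le
    calc S.card = Fintype.card {e // e ∈ S} := (Fintype.card_coe S).symm
      _ ≤ Module.finrank ℚ M := h1
      _ ≤ Sb.card := h2.trans h3
  -- counting
  have hγcard : suppCard γ = 2 * S.card := by
    have h := half_card_aux inv hinv (fun e => γ e ≠ 0)
      (fun e he => by show γ (inv e) ≠ 0; rw [hγ]; simpa using he) S hS1 hS2 hS3
    unfold suppCard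
    convert h using 2
    ext x
    simp
  have hbcard : suppCard b = 2 * Sb.card := by
    have h := half_card_aux inv hinv (fun e => b e ≠ 0)
      (fun e he => by show b (inv e) ≠ 0; rw [hb]; simpa using he) Sb hSb1 hSb2 hSb3
    unfold suppCard
    convert h using 2
    ext x
    simp
  rw [hγcard, hbcard]
  omega
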